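/- Let f, g and h be entire functions given by everywhere absolutely convergent vector valued Dirichlet series, and let p ≥ 0, q ≥ 0, m ≥ 0 be integers. Assume f is of regular relative (m,q) Ritt growth with respect to h with 0 < λ_h^{(m,q)}(f) = ρ_h^{(m,q)}(f) < +∞, and assume 0 < λ_h^{(m,p)}(g) ≤ ρ_h^{(m,p)}(g) < +∞. Then λ_g^{(p,q)}(f) = ρ_h^{(m,q)}(f)/ρ_h^{(m,p)}(g) and ρ_g^{(p,q)}(f) = ρ_h^{(m,q)}(f)/λ_h^{(m,p)}(g). If in addition ρ_h^{(m,q)}(f) = ρ_h^{(m,p)}(g), then λ_g^{(p,q)}(f) = ρ_f^{(q,p)}(g) = 1. -/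

import Mathlib

open Filter Topology

noncomputable section

/-- An entire function given by an everywhere absolutely convergent
vector valued Dirichlet series, with coefficients in a Banach space `E`. -/
structure VVDS (E : Type*) [NormedAddCommGroup E] [NormedSpace ℂ E] [CompleteSpace E] where
  a : ℕ → E
  lam : ℕ → ℝ
  lam_pos : ∀ n, 0 < lam n
  lam_strictMono : StrictMono lam
  lam_tendsto : Tendsto lam atTop atTop
  log_index_bound : ∃ D : ℝ, ∀ᶠ n : ℕ in atTop, Real.log (n : ℝ) / lam n ≤ D
  coeff_decay : Tendsto (fun n => Real.log ‖a n‖ / lam n) atTop atBot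
  abs_conv : ∀ s : ℂ, Summable (fun n => Real.exp (s.re * lam n) * ‖a n‖)

variable {E F G : Type*} [NormedAddCommGroup E] [NormedSpace ℂ E] [CompleteSpace E]
  [NormedAddCommGroup F] [NormedSpace ℂ F] [CompleteSpace F]
  [NormedAddCommGroup G] [NormedSpace ℂ G] [CompleteSpace G]

/-- The entire function defined by the vector valued Dirichlet series. -/
def VVDS.toFun (f : VVDS E) (s : ℂ) : E := ∑' n, Complex.exp (s * (f.lam n : ℂ)) • f.a n

/-- The maximum modulus function `M_f(σ) = sup_t ‖f(σ+it)‖`. -/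
def VVDS.M (f : VVDS E) (σ : ℝ) : ℝ := ⨆ t : ℝ, ‖f.toFun ((σ : ℂ) + (t : ℂ) * Complex.I)‖

/-- The inverse function of the maximum modulus function. -/
def VVDS.Minv (f : VVDS E) (y : ℝ) : ℝ := sInf {σ : ℝ | y ≤ f.M σ}

/-- The (p,q)-th relative Ritt order of `f` with respect to `g`. -/
def relRittOrder (p q : ℕ) (f : VVDS E) (g : VVDS F) : EReal :=
  limsup (fun σ : ℝ =>
    ((Real.log^[p] (g.Minv (f.M σ)) / Real.log^[q] σ : ℝ) : EReal)) atTop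

/-- The (p,q)-th relative Ritt lower order of `f` with respect to `g`. -/
def relRittLowerOrder (p q : ℕ) (f : VVDS E) (g : VVDS F) : EReal :=
  liminf (fun σ : ℝ =>
    ((Real.log^[p] (g.Minv (f.M σ)) / Real.log^[q] σ : ℝ) : EReal)) atTop

/-- The (p,q)-th relative Ritt type of `f` with respect to `g`. -/
def relRittType (p q : ℕ) (f : VVDS E) (g : VVDS F) : EReal :=
  limsup (fun σ : ℝ =>
    ((Real.log^[p-1] (g.Minv (f.M σ)) /
      (Real.log^[q-1] σ) ^ (relRittOrder p q f g).toReal : ℝ) : EReal)) atTop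

/-- The (p,q)-th relative Ritt lower type of `f` with respect to `g`. -/
def relRittLowerType (p q : ℕ) (f : VVDS E) (g : VVDS F) : EReal :=
  liminf (fun σ : ℝ =>
    ((Real.log^[p-1] (g.Minv (f.M σ)) /
      (Real.log^[q-1] σ) ^ (relRittOrder p q f g).toReal : ℝ) : EReal)) atTop

/-- The (p,q)-th relative Ritt weak type of `f` with respect to `g`. -/
def relRittWeakType (p q : ℕ) (f : VVDS E) (g : VVDS F) : EReal :=
  liminf (fun σ : ℝ =>
    ((Real.log^[p-1] (g.Minv (f.M σ)) /
      (Real.log^[q-1] σ) ^ (relRittLowerOrder p q f g).toReal : ℝ) : EReal)) atTop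

/-- The growth indicator `τ̄_g^{(p,q)}(f)`. -/
def relRittUpperWeakType (p q : ℕ) (f : VVDS E) (g : VVDS F) : EReal :=
  limsup (fun σ : ℝ =>
    ((Real.log^[p-1] (g.Minv (f.M σ)) /
      (Real.log^[q-1] σ) ^ (relRittLowerOrder p q f g).toReal : ℝ) : EReal)) atTop


namespace RittAux

lemma ereal_le_coe_of {a : EReal} {r : ℝ} (h : ∀ ε : ℝ, 0 < ε → a ≤ ((r + ε : ℝ) : EReal)) :
    a ≤ (r : EReal) := by
  by_contra hcon
  push_neg at hcon
  rcases EReal.lt_iff_exists_real_btwn.1 hcon with ⟨s, hrs, hsa⟩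
  have hrs' : r < s := by exact_mod_cast hrs
  have := h (s - r) (by linarith)
  rw [show r + (s - r) = s by ring] at this
  exact absurd (lt_of_lt_of_le hsa this) (lt_irrefl _)

lemma ereal_coe_le_of {a : EReal} {r : ℝ} (h : ∀ ε : ℝ, 0 < ε → ((r - ε : ℝ) : EReal) ≤ a) :
    (r : EReal) ≤ a := by
  by_contra hcon
  push_neg at hcon
  rcases EReal.lt_iff_exists_real_btwn.1 hcon with ⟨s, has, hsr⟩
  have hsr' : s < r := by exact_mod_cast hsr
  have := h (r - s) (by linarith)
  rw [show r - (r - s) = s by ring] at this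
  exact absurd (lt_of_le_of_lt this has) (lt_irrefl _)

lemma limsup_eq_of_bounds {u : ℝ → ℝ} {r : ℝ}
    (hub : ∀ ε : ℝ, 0 < ε → ∀ᶠ x in atTop, u x ≤ r + ε)
    (hlb : ∀ ε : ℝ, 0 < ε → ∃ᶠ x in atTop, r - ε ≤ u x) :
    limsup (fun x => ((u x : ℝ) : EReal)) atTop = (r : EReal) := by
  apply le_antisymm
  · apply ereal_le_coe_of
    intro ε hε
    apply limsup_le_of_le (by isBoundedDefault)
    filter_upwards [hub ε hε] with x hx
    exact_mod_cast hx
  · apply ereal_coe_le_of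
    intro ε hε
    apply le_limsup_of_frequently_le ?_ (by isBoundedDefault)
    apply (hlb ε hε).mono
    intro x hx
    exact_mod_cast hx

lemma liminf_eq_of_bounds {u : ℝ → ℝ} {r : ℝ}
    (hlb : ∀ ε : ℝ, 0 < ε → ∀ᶠ x in atTop, r - ε ≤ u x)
    (hub : ∀ ε : ℝ, 0 < ε → ∃ᶠ x in atTop, u x ≤ r + ε) :
    liminf (fun x => ((u x : ℝ) : EReal)) atTop = (r : EReal) := by
  apply le_antisymm
  · apply ereal_le_coe_of
    intro ε hε
    apply liminf_le_of_frequently_le ?_ (by isBoundedDefault)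
    apply (hub ε hε).mono
    intro x hx
    exact_mod_cast hx
  · apply ereal_coe_le_of
    intro ε hε
    apply le_liminf_of_le (by isBoundedDefault)
    filter_upwards [hlb ε hε] with x hx
    exact_mod_cast hx

lemma eps_choice {c lam : ℝ} (hc : 0 < c) (hlam : 0 < lam) {ε' : ℝ} (hε' : 0 < ε') :
    ∃ ε : ℝ, 0 < ε ∧ ε < lam ∧ ε < c ∧ (c + ε) / (lam - ε) ≤ c / lam + ε' ∧
      c / lam - ε' ≤ (c - ε) / (lam + ε) := by
  have h1 : Tendsto (fun ε : ℝ => (c + ε) / (lam - ε)) (𝓝[>] 0) (𝓝 (c / lam)) := by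
    apply Tendsto.mono_left _ nhdsWithin_le_nhds
    have : Tendsto (fun ε : ℝ => (c + ε) / (lam - ε)) (𝓝 0) (𝓝 ((c + 0) / (lam - 0))) :=
      Tendsto.div (tendsto_const_nhds.add tendsto_id) (tendsto_const_nhds.sub tendsto_id)
        (by simpa using hlam.ne')
    simpa using this
  have h2 : Tendsto (fun ε : ℝ => (c - ε) / (lam + ε)) (𝓝[>] 0) (𝓝 (c / lam)) := by
    apply Tendsto.mono_left _ nhdsWithin_le_nhds
    have : Tendsto (fun ε : ℝ => (c - ε) / (lam + ε)) (𝓝 0) (𝓝 ((c - 0) / (lam + 0))) :=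
      Tendsto.div (tendsto_const_nhds.sub tendsto_id) (tendsto_const_nhds.add tendsto_id)
        (by simpa using hlam.ne')
    simpa using this
  have e1 : ∀ᶠ ε : ℝ in 𝓝[>] 0, (c + ε) / (lam - ε) < c / lam + ε' :=
    h1.eventually_lt_const (by linarith)
  have e2 : ∀ᶠ ε : ℝ in 𝓝[>] 0, c / lam - ε' < (c - ε) / (lam + ε) :=
    h2.eventually_const_lt (by linarith)
  have e3 : ∀ᶠ ε : ℝ in 𝓝[>] 0, ε < min lam c := by
    apply eventually_nhdsWithin_of_eventually_nhds
    exact Filter.Tendsto.eventually_lt_const (by positivity) tendsto_id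
  have e4 : ∀ᶠ ε : ℝ in 𝓝[>] 0, 0 < ε := self_mem_nhdsWithin
  obtain ⟨ε, hε1, hε2, hε3, hε4⟩ := (e1.and (e2.and (e3.and e4))).exists
  exact ⟨ε, hε4, (lt_min_iff.1 hε3).1, (lt_min_iff.1 hε3).2, hε1.le, hε2.le⟩


variable {α γ : ℝ → ℝ} {c lam rho : ℝ}

lemma quo_ev (hα : Tendsto α atTop (𝓝 c))
    (hinf : liminf (fun x => ((γ x : ℝ) : EReal)) atTop = (lam : EReal))
    (hsup : limsup (fun x => ((γ x : ℝ) : EReal)) atTop = (rho : EReal)) :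
    ∀ ε : ℝ, 0 < ε →
      (∀ᶠ x in atTop, c - ε ≤ α x ∧ α x ≤ c + ε ∧ lam - ε ≤ γ x ∧ γ x ≤ rho + ε) := by
  intro ε hε
  have hα1 : ∀ᶠ x in atTop, c - ε ≤ α x ∧ α x ≤ c + ε := by
    have := hα.eventually (eventually_abs_sub_lt c hε)
    filter_upwards [this] with x hx
    rw [abs_sub_lt_iff] at hx
    constructor <;> linarith [hx.1, hx.2]
  have hγ1 : ∀ᶠ x in atTop, lam - ε ≤ γ x := by
    have h' : ((lam - ε : ℝ) : EReal) < liminf (fun x => ((γ x : ℝ) : EReal)) atTop := by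
      rw [hinf]; exact_mod_cast (by linarith : lam - ε < lam)
    filter_upwards [eventually_lt_of_lt_liminf h'] with x hx
    exact le_of_lt (by exact_mod_cast hx)
  have hγ2 : ∀ᶠ x in atTop, γ x ≤ rho + ε := by
    have h' : limsup (fun x => ((γ x : ℝ) : EReal)) atTop < ((rho + ε : ℝ) : EReal) := by
      rw [hsup]; exact_mod_cast (by linarith : rho < rho + ε)
    filter_upwards [eventually_lt_of_limsup_lt h'] with x hx
    exact le_of_lt (by exact_mod_cast hx)
  filter_upwards [hα1, hγ1, hγ2] with x h1 h2 h3
  exact ⟨h1.1, h1.2, h2, h3⟩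

lemma quo_freq_hi (hsup : limsup (fun x => ((γ x : ℝ) : EReal)) atTop = (rho : EReal))
    {ε : ℝ} (hε : 0 < ε) : ∃ᶠ x in atTop, rho - ε < γ x := by
  have h' : ((rho - ε : ℝ) : EReal) < limsup (fun x => ((γ x : ℝ) : EReal)) atTop := by
    rw [hsup]; exact_mod_cast (by linarith : rho - ε < rho)
  apply (frequently_lt_of_lt_limsup (by isBoundedDefault) h').mono
  intro x hx
  exact_mod_cast hx

lemma quo_freq_lo (hinf : liminf (fun x => ((γ x : ℝ) : EReal)) atTop = (lam : EReal))
    {ε : ℝ} (hε : 0 < ε) : ∃ᶠ x in atTop, γ x < lam + ε := by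
  have h' : liminf (fun x => ((γ x : ℝ) : EReal)) atTop < ((lam + ε : ℝ) : EReal) := by
    rw [hinf]; exact_mod_cast (by linarith : lam < lam + ε)
  apply (frequently_lt_of_liminf_lt (by isBoundedDefault) h').mono
  intro x hx
  exact_mod_cast hx

lemma quo (hc : 0 < c) (hlam : 0 < lam) (hlr : lam ≤ rho)
    (hα : Tendsto α atTop (𝓝 c))
    (hinf : liminf (fun x => ((γ x : ℝ) : EReal)) atTop = (lam : EReal))
    (hsup : limsup (fun x => ((γ x : ℝ) : EReal)) atTop = (rho : EReal)) :
    liminf (fun x => ((α x / γ x : ℝ) : EReal)) atTop = ((c / rho : ℝ) : EReal) ∧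
    limsup (fun x => ((α x / γ x : ℝ) : EReal)) atTop = ((c / lam : ℝ) : EReal) := by
  have hrho : 0 < rho := lt_of_lt_of_le hlam hlr
  have hev := quo_ev hα hinf hsup
  constructor
  · apply liminf_eq_of_bounds
    · intro ε' hε'
      obtain ⟨ε, hε, hεrho, hεc, _, hlow⟩ := eps_choice hc hrho hε'
      set ε₃ := min ε (min (lam / 2) (c / 2)) with hε₃def
      have hε₃pos : 0 < ε₃ := lt_min hε (lt_min (by linarith) (by linarith))
      have hε₃a : ε₃ ≤ ε := min_le_left _ _
      have hε₃b : ε₃ ≤ lam / 2 := le_trans (min_le_right _ _) (min_le_left _ _)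
      have hε₃c : ε₃ ≤ c / 2 := le_trans (min_le_right _ _) (min_le_right _ _)
      filter_upwards [hev ε₃ hε₃pos] with x ⟨h1, _, h3, h4⟩
      have hγpos : 0 < γ x := by linarith
      calc c / rho - ε' ≤ (c - ε) / (rho + ε) := hlow
        _ ≤ (c - ε₃) / (rho + ε₃) :=
            div_le_div₀ (by linarith) (by linarith) (by linarith) (by linarith)
        _ ≤ α x / γ x := div_le_div₀ (by linarith) h1 hγpos h4
    · intro ε' hε'
      obtain ⟨ε, hε, hεrho, hεc, hup, _⟩ := eps_choice hc hrho hε'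
      set ε₃ := min ε (min (lam / 2) (c / 2)) with hε₃def
      have hε₃pos : 0 < ε₃ := lt_min hε (lt_min (by linarith) (by linarith))
      have hε₃a : ε₃ ≤ ε := min_le_left _ _
      have hε₃b : ε₃ ≤ lam / 2 := le_trans (min_le_right _ _) (min_le_left _ _)
      have hε₃c : ε₃ ≤ c / 2 := le_trans (min_le_right _ _) (min_le_right _ _)
      have hεrho3 : ε₃ < rho := lt_of_le_of_lt hε₃a hεrho
      apply ((hev ε₃ hε₃pos).and_frequently (quo_freq_hi hsup hε₃pos)).mono
      rintro x ⟨⟨_, h2, h3, _⟩, h5⟩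
      calc α x / γ x ≤ (c + ε₃) / (rho - ε₃) :=
            div_le_div₀ (by linarith) h2 (by linarith) (le_of_lt h5)
        _ ≤ (c + ε) / (rho - ε) := by
            apply div_le_div₀ (by linarith) (by linarith) (by linarith) (by linarith)
        _ ≤ c / rho + ε' := hup
  · apply limsup_eq_of_bounds
    · intro ε' hε'
      obtain ⟨ε, hε, hεlam, hεc, hup, _⟩ := eps_choice hc hlam hε'
      set ε₃ := min ε (min (lam / 2) (c / 2)) with hε₃def
      have hε₃pos : 0 < ε₃ := lt_min hε (lt_min (by linarith) (by linarith))
      have hε₃a : ε₃ ≤ ε := min_le_left _ _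
      have hε₃b : ε₃ ≤ lam / 2 := le_trans (min_le_right _ _) (min_le_left _ _)
      have hε₃c : ε₃ ≤ c / 2 := le_trans (min_le_right _ _) (min_le_right _ _)
      filter_upwards [hev ε₃ hε₃pos] with x ⟨_, h2, h3, _⟩
      calc α x / γ x ≤ (c + ε₃) / (lam - ε₃) :=
            div_le_div₀ (by linarith) h2 (by linarith) h3
        _ ≤ (c + ε) / (lam - ε) := by
            apply div_le_div₀ (by linarith) (by linarith) (by linarith) (by linarith)
        _ ≤ c / lam + ε' := hup
    · intro ε' hε'
      obtain ⟨ε, hε, hεlam, hεc, _, hlow⟩ := eps_choice hc hlam hε'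
      set ε₃ := min ε (min (lam / 2) (c / 2)) with hε₃def
      have hε₃pos : 0 < ε₃ := lt_min hε (lt_min (by linarith) (by linarith))
      have hε₃a : ε₃ ≤ ε := min_le_left _ _
      have hε₃b : ε₃ ≤ lam / 2 := le_trans (min_le_right _ _) (min_le_left _ _)
      have hε₃c : ε₃ ≤ c / 2 := le_trans (min_le_right _ _) (min_le_right _ _)
      apply ((hev ε₃ hε₃pos).and_frequently (quo_freq_lo hinf hε₃pos)).mono
      rintro x ⟨⟨h1, _, h3, _⟩, h5⟩
      calc c / lam - ε' ≤ (c - ε) / (lam + ε) := hlow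
        _ ≤ (c - ε₃) / (lam + ε₃) := by
            apply div_le_div₀ (by linarith) (by linarith) (by linarith) (by linarith)
        _ ≤ α x / γ x := div_le_div₀ (by linarith) h1 (by linarith) (le_of_lt h5)

lemma quo2 (hc : 0 < c) (hlam : 0 < lam) (hlr : lam ≤ rho)
    (hα : Tendsto α atTop (𝓝 c))
    (hinf : liminf (fun x => ((γ x : ℝ) : EReal)) atTop = (lam : EReal))
    (hsup : limsup (fun x => ((γ x : ℝ) : EReal)) atTop = (rho : EReal)) :
    limsup (fun x => ((γ x / α x : ℝ) : EReal)) atTop = ((rho / c : ℝ) : EReal) := by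
  have hrho : 0 < rho := lt_of_lt_of_le hlam hlr
  have hev := quo_ev hα hinf hsup
  apply limsup_eq_of_bounds
  · intro ε' hε'
    obtain ⟨ε, hε, hεc, hεrho, hup, _⟩ := eps_choice hrho hc hε'
    set ε₃ := min ε (min (lam / 2) (c / 2)) with hε₃def
    have hε₃pos : 0 < ε₃ := lt_min hε (lt_min (by linarith) (by linarith))
    have hε₃a : ε₃ ≤ ε := min_le_left _ _
    have hε₃b : ε₃ ≤ lam / 2 := le_trans (min_le_right _ _) (min_le_left _ _)
    have hε₃c : ε₃ ≤ c / 2 := le_trans (min_le_right _ _) (min_le_right _ _)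
    filter_upwards [hev ε₃ hε₃pos] with x ⟨h1, _, h3, h4⟩
    calc γ x / α x ≤ (rho + ε₃) / (c - ε₃) :=
          div_le_div₀ (by linarith) h4 (by linarith) h1
      _ ≤ (rho + ε) / (c - ε) := by
          apply div_le_div₀ (by linarith) (by linarith) (by linarith) (by linarith)
      _ ≤ rho / c + ε' := hup
  · intro ε' hε'
    obtain ⟨ε, hε, hεc, hεrho, _, hlow⟩ := eps_choice hrho hc hε'
    set ε₃ := min ε (min (lam / 2) (c / 2)) with hε₃def
    have hε₃pos : 0 < ε₃ := lt_min hε (lt_min (by linarith) (by linarith))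
    have hε₃a : ε₃ ≤ ε := min_le_left _ _
    have hε₃b : ε₃ ≤ lam / 2 := le_trans (min_le_right _ _) (min_le_left _ _)
    have hε₃c : ε₃ ≤ c / 2 := le_trans (min_le_right _ _) (min_le_right _ _)
    apply ((hev ε₃ hε₃pos).and_frequently (quo_freq_hi hsup hε₃pos)).mono
    rintro x ⟨⟨h1, h2, h3, _⟩, h5⟩
    have hεrho3 : ε₃ < rho := by
      calc ε₃ ≤ lam / 2 := hε₃b
        _ < rho := by linarith
    calc rho / c - ε' ≤ (rho - ε) / (c + ε) := hlow
      _ ≤ (rho - ε₃) / (c + ε₃) := by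
          apply div_le_div₀ (by linarith) (by linarith) (by linarith) (by linarith)
      _ ≤ γ x / α x := div_le_div₀ (by linarith) (le_of_lt h5) (by linarith) h2

end RittAux


namespace VVDS

/-- The sum of norms, as a function of the real part. -/
def S (f : VVDS E) (σ : ℝ) : ℝ := ∑' n, Real.exp (σ * f.lam n) * ‖f.a n‖

variable (f : VVDS E)

lemma summable_S (σ : ℝ) : Summable (fun n => Real.exp (σ * f.lam n) * ‖f.a n‖) := by
  simpa using f.abs_conv (σ : ℂ)

lemma norm_term (s : ℂ) (n : ℕ) :
    ‖Complex.exp (s * (f.lam n : ℂ)) • f.a n‖ = Real.exp (s.re * f.lam n) * ‖f.a n‖ := by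
  rw [norm_smul, Complex.norm_exp]
  congr 2
  simp [Complex.mul_re]

lemma summable_norm_term (s : ℂ) :
    Summable (fun n => ‖Complex.exp (s * (f.lam n : ℂ)) • f.a n‖) := by
  simpa only [f.norm_term s] using f.abs_conv s

lemma summable_term (s : ℂ) : Summable (fun n => Complex.exp (s * (f.lam n : ℂ)) • f.a n) :=
  (f.summable_norm_term s).of_norm

lemma norm_toFun_le (s : ℂ) : ‖f.toFun s‖ ≤ f.S s.re := by
  rw [toFun, S]
  refine (norm_tsum_le_tsum_norm (f.summable_norm_term s)).trans_eq ?_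
  exact tsum_congr fun n => f.norm_term s n

lemma bddAbove_M (σ : ℝ) :
    BddAbove (Set.range fun t : ℝ => ‖f.toFun ((σ : ℂ) + (t : ℂ) * Complex.I)‖) := by
  refine ⟨f.S σ, ?_⟩
  rintro x ⟨t, rfl⟩
  have := f.norm_toFun_le ((σ : ℂ) + (t : ℂ) * Complex.I)
  simpa using this

lemma norm_le_M (s : ℂ) : ‖f.toFun s‖ ≤ f.M s.re := by
  have h := le_ciSup (f.bddAbove_M s.re) s.im
  simp only [Complex.re_add_im] at h
  exact h

lemma M_le_S (σ : ℝ) : f.M σ ≤ f.S σ :=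
  ciSup_le fun t => by simpa using f.norm_toFun_le ((σ : ℂ) + (t : ℂ) * Complex.I)

lemma M_nonneg (σ : ℝ) : 0 ≤ f.M σ :=
  le_trans (norm_nonneg _) (by simpa using f.norm_le_M (σ : ℂ))

lemma S_mono : Monotone f.S := by
  intro σ1 σ2 h
  apply Summable.tsum_le_tsum _ (f.summable_S σ1) (f.summable_S σ2)
  intro n
  apply mul_le_mul_of_nonneg_right _ (norm_nonneg _)
  exact Real.exp_le_exp.2 (mul_le_mul_of_nonneg_right h (f.lam_pos n).le)

lemma S_le_exp_mul (σ : ℝ) (hσ : σ ≤ 0) : f.S σ ≤ Real.exp (σ * f.lam 0) * f.S 0 := by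
  rw [S, S, ← tsum_mul_left]
  apply Summable.tsum_le_tsum _ (f.summable_S σ) ((f.summable_S 0).mul_left _)
  intro n
  rw [← mul_assoc]
  apply mul_le_mul_of_nonneg_right _ (norm_nonneg _)
  rw [show (0 : ℝ) * f.lam n = 0 by ring, Real.exp_zero, mul_one]
  apply Real.exp_le_exp.2
  have : f.lam 0 ≤ f.lam n := f.lam_strictMono.monotone (Nat.zero_le n)
  nlinarith [f.lam_pos 0]

lemma S_tendsto_atBot : Tendsto f.S atBot (𝓝 0) := by
  have h1 : Tendsto (fun σ : ℝ => Real.exp (σ * f.lam 0) * f.S 0) atBot (𝓝 0) := by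
    have h : Tendsto (fun σ : ℝ => Real.exp (σ * f.lam 0) * f.S 0) atBot (𝓝 (0 * f.S 0)) := by
      apply Tendsto.mul_const
      apply Real.tendsto_exp_atBot.comp
      exact Tendsto.atBot_mul_const (f.lam_pos 0) tendsto_id
    simpa using h
  have h0 : Tendsto (fun _ : ℝ => (0 : ℝ)) atBot (𝓝 0) := tendsto_const_nhds
  apply tendsto_of_tendsto_of_tendsto_of_le_of_le' h0 h1
  · filter_upwards with σ
    exact tsum_nonneg fun n => mul_nonneg (Real.exp_pos _).le (norm_nonneg _)
  · filter_upwards [eventually_le_atBot (0 : ℝ)] with σ hσ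
    exact f.S_le_exp_mul σ hσ

lemma M_tendsto_atBot : Tendsto f.M atBot (𝓝 0) := by
  apply tendsto_of_tendsto_of_tendsto_of_le_of_le' tendsto_const_nhds f.S_tendsto_atBot
  · filter_upwards with σ; exact f.M_nonneg σ
  · filter_upwards with σ; exact f.M_le_S σ

lemma S_continuous : Continuous f.S := by
  rw [continuous_iff_continuousAt]
  intro σ0
  have hsub : Set.Iio (σ0 + 1) ∈ 𝓝 σ0 := Iio_mem_nhds (by linarith)
  have hcont : ContinuousOn f.S (Set.Iio (σ0 + 1)) := by
    apply continuousOn_tsum (u := fun n => Real.exp ((σ0 + 1) * f.lam n) * ‖f.a n‖)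
    · intro n
      apply ContinuousOn.mul _ continuousOn_const
      exact (Real.continuous_exp.comp (continuous_id.mul continuous_const)).continuousOn
    · exact f.summable_S (σ0 + 1)
    · intro n σ hσ
      rw [Real.norm_eq_abs, abs_of_nonneg (mul_nonneg (Real.exp_pos _).le (norm_nonneg _))]
      apply mul_le_mul_of_nonneg_right _ (norm_nonneg _)
      exact Real.exp_le_exp.2 (mul_le_mul_of_nonneg_right (le_of_lt hσ) (f.lam_pos n).le)
  exact hcont.continuousAt hsub


lemma toFun_sub_le (σ1 σ2 t : ℝ) (h : σ2 ≤ σ1) :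
    ‖f.toFun ((σ1 : ℂ) + (t : ℂ) * Complex.I) - f.toFun ((σ2 : ℂ) + (t : ℂ) * Complex.I)‖
      ≤ f.S σ1 - f.S σ2 := by
  set s1 : ℂ := (σ1 : ℂ) + (t : ℂ) * Complex.I with hs1
  set s2 : ℂ := (σ2 : ℂ) + (t : ℂ) * Complex.I with hs2
  have hs1re : s1.re = σ1 := by simp [hs1]
  have hs2re : s2.re = σ2 := by simp [hs2]
  have key : ∀ n, ‖Complex.exp (s1 * (f.lam n : ℂ)) • f.a n
      - Complex.exp (s2 * (f.lam n : ℂ)) • f.a n‖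
      = (Real.exp (σ1 * f.lam n) - Real.exp (σ2 * f.lam n)) * ‖f.a n‖ := by
    intro n
    rw [← sub_smul, norm_smul]
    congr 1
    have hdiff : s1 * (f.lam n : ℂ) - s2 * (f.lam n : ℂ) = (((σ1 - σ2) * f.lam n : ℝ) : ℂ) := by
      rw [hs1, hs2]; push_cast; ring
    have : Complex.exp (s1 * (f.lam n : ℂ)) - Complex.exp (s2 * (f.lam n : ℂ))
        = Complex.exp (s2 * (f.lam n : ℂ)) *
          (Complex.exp ((((σ1 - σ2) * f.lam n : ℝ) : ℂ)) - 1) := by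
      rw [mul_sub, mul_one, ← Complex.exp_add]
      congr 1
      rw [← hdiff]; ring
    rw [this, norm_mul, Complex.norm_exp]
    rw [show Complex.exp ((((σ1 - σ2) * f.lam n : ℝ) : ℂ))
        = ((Real.exp ((σ1 - σ2) * f.lam n) : ℝ) : ℂ) by rw [Complex.ofReal_exp]]
    rw [show ((Real.exp ((σ1 - σ2) * f.lam n) : ℝ) : ℂ) - 1
        = (((Real.exp ((σ1 - σ2) * f.lam n) - 1 : ℝ)) : ℂ) by push_cast; ring]
    rw [Complex.norm_real, Real.norm_eq_abs, abs_of_nonneg]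
    · have hre2 : (s2 * (f.lam n : ℂ)).re = σ2 * f.lam n := by
        simp [hs2, Complex.mul_re]
      rw [hre2, show (σ1 - σ2) * f.lam n = σ1 * f.lam n - σ2 * f.lam n by ring,
        Real.exp_sub]
      have hpos : (0:ℝ) < Real.exp (σ2 * f.lam n) := Real.exp_pos _
      field_simp
    · have : (1:ℝ) ≤ Real.exp ((σ1 - σ2) * f.lam n) := by
        rw [← Real.exp_zero]
        apply Real.exp_le_exp.2
        have := f.lam_pos n
        nlinarith
      linarith
  have hsummable : Summable (fun n => ‖Complex.exp (s1 * (f.lam n : ℂ)) • f.a n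
      - Complex.exp (s2 * (f.lam n : ℂ)) • f.a n‖) := by
    apply Summable.of_nonneg_of_le (fun n => norm_nonneg _)
      (fun n => ?_) ((f.summable_S σ1).sub (f.summable_S σ2))
    rw [key n, sub_mul]
  calc ‖f.toFun s1 - f.toFun s2‖
      = ‖∑' n, (Complex.exp (s1 * (f.lam n : ℂ)) • f.a n
          - Complex.exp (s2 * (f.lam n : ℂ)) • f.a n)‖ := by
        rw [toFun, toFun, Summable.tsum_sub (f.summable_term s1) (f.summable_term s2)]
    _ ≤ ∑' n, ‖Complex.exp (s1 * (f.lam n : ℂ)) • f.a n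
          - Complex.exp (s2 * (f.lam n : ℂ)) • f.a n‖ := norm_tsum_le_tsum_norm hsummable
    _ = ∑' n, ((Real.exp (σ1 * f.lam n) - Real.exp (σ2 * f.lam n)) * ‖f.a n‖) :=
        tsum_congr key
    _ = f.S σ1 - f.S σ2 := by
        rw [S, S, ← Summable.tsum_sub (f.summable_S σ1) (f.summable_S σ2)]
        exact tsum_congr fun n => by ring

lemma M_dist_le (σ1 σ2 : ℝ) (h : σ2 ≤ σ1) : |f.M σ1 - f.M σ2| ≤ f.S σ1 - f.S σ2 := by
  have h1 : f.M σ1 ≤ f.M σ2 + (f.S σ1 - f.S σ2) := by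
    apply ciSup_le
    intro t
    calc ‖f.toFun ((σ1 : ℂ) + (t : ℂ) * Complex.I)‖
        ≤ ‖f.toFun ((σ2 : ℂ) + (t : ℂ) * Complex.I)‖
          + ‖f.toFun ((σ1 : ℂ) + (t : ℂ) * Complex.I)
              - f.toFun ((σ2 : ℂ) + (t : ℂ) * Complex.I)‖ := by
          have := norm_sub_norm_le (f.toFun ((σ1 : ℂ) + (t : ℂ) * Complex.I))
            (f.toFun ((σ2 : ℂ) + (t : ℂ) * Complex.I))
          linarith
      _ ≤ f.M σ2 + (f.S σ1 - f.S σ2) := by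
          have h2 := le_ciSup (f.bddAbove_M σ2) t
          exact add_le_add h2 (f.toFun_sub_le σ1 σ2 t h)
  have h2 : f.M σ2 ≤ f.M σ1 + (f.S σ1 - f.S σ2) := by
    apply ciSup_le
    intro t
    calc ‖f.toFun ((σ2 : ℂ) + (t : ℂ) * Complex.I)‖
        ≤ ‖f.toFun ((σ1 : ℂ) + (t : ℂ) * Complex.I)‖
          + ‖f.toFun ((σ1 : ℂ) + (t : ℂ) * Complex.I)
              - f.toFun ((σ2 : ℂ) + (t : ℂ) * Complex.I)‖ := by
          have := norm_sub_norm_le (f.toFun ((σ2 : ℂ) + (t : ℂ) * Complex.I))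
            (f.toFun ((σ1 : ℂ) + (t : ℂ) * Complex.I))
          rw [norm_sub_rev] at this
          linarith
      _ ≤ f.M σ1 + (f.S σ1 - f.S σ2) := by
          have h2 := le_ciSup (f.bddAbove_M σ1) t
          exact add_le_add h2 (f.toFun_sub_le σ1 σ2 t h)
  rw [abs_le]
  constructor <;> linarith

lemma M_continuous : Continuous f.M := by
  rw [Metric.continuous_iff]
  intro σ0 ε hε
  have hS := Metric.continuous_iff.1 f.S_continuous σ0 ε hε
  obtain ⟨δ, hδ, hS⟩ := hS
  refine ⟨δ, hδ, fun σ hσ => ?_⟩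
  have hSd := hS σ hσ
  rw [Real.dist_eq] at *
  rcases le_total σ0 σ with hle | hle
  · have := f.M_dist_le σ σ0 hle
    have h2 : f.S σ - f.S σ0 ≤ |f.S σ - f.S σ0| := le_abs_self _
    linarith [abs_sub_abs_le_abs_sub (f.M σ) (f.M σ0)]
  · have := f.M_dist_le σ0 σ hle
    have h2 : f.S σ0 - f.S σ ≤ |f.S σ - f.S σ0| := by
      rw [abs_sub_comm]; exact le_abs_self _
    rw [abs_sub_comm]
    linarith

lemma differentiable_toFun : Differentiable ℂ f.toFun := by
  intro z
  set c := z.re + 1 with hc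
  set U : Set ℂ := Complex.re ⁻¹' Set.Iio c with hU'
  have hU : IsOpen U := isOpen_Iio.preimage Complex.continuous_re
  have hd : DifferentiableOn ℂ (fun w : ℂ => ∑' n, Complex.exp (w * (f.lam n : ℂ)) • f.a n) U := by
    apply Complex.differentiableOn_tsum_of_summable_norm (f.summable_S c)
    · intro n
      apply Differentiable.differentiableOn
      exact (Complex.differentiable_exp.comp (differentiable_id.mul (differentiable_const _))).smul_const _
    · exact hU
    · intro n w hw
      rw [f.norm_term w n]
      apply mul_le_mul_of_nonneg_right _ (norm_nonneg _)
      apply Real.exp_le_exp.2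
      exact mul_le_mul_of_nonneg_right (le_of_lt hw) (f.lam_pos n).le
  have hz : z ∈ U := by simp [hU', hc]
  exact (hd.differentiableAt (hU.mem_nhds hz))

lemma M_interp (σ0 σ2 : ℝ) (hlt : σ0 < σ2) {u : ℝ} (hu0 : 0 ≤ u) (hu1 : u ≤ 1) :
    f.M (σ0 + u * (σ2 - σ0)) ≤ f.M σ0 ^ (1 - u) * f.M σ2 ^ u := by
  set d := σ2 - σ0 with hd
  have hdpos : 0 < d := by rw [hd]; linarith
  set g : ℂ → E := fun z => f.toFun ((σ0 : ℂ) + z * (d : ℂ)) with hg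
  have hgdiff : Differentiable ℂ g := by
    apply f.differentiable_toFun.comp
    exact (differentiable_const _).add (differentiable_id.mul (differentiable_const _))
  have hre : ∀ z : ℂ, ((σ0 : ℂ) + z * (d : ℂ)).re = σ0 + z.re * d := by
    intro z; simp [Complex.add_re, Complex.mul_re]
  apply ciSup_le; intro t
  set z : ℂ := (u : ℂ) + ((t / d : ℝ) : ℂ) * Complex.I with hz
  have hzre : z.re = u := by simp [hz]
  have hzpt : (((σ0 + u * d : ℝ) : ℂ) + ((t : ℝ) : ℂ) * Complex.I) = (σ0 : ℂ) + z * (d : ℂ) := by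
    have hdC : (d : ℂ) ≠ 0 := by exact_mod_cast hdpos.ne'
    rw [hz]; push_cast; field_simp
    ring_nf
  have key := Complex.HadamardThreeLines.norm_le_interp_of_mem_verticalClosedStrip₀₁' g
    (z := z) (a := f.M σ0) (b := f.M σ2) ?_ ?_ ?_ ?_ ?_
  · rw [hzre] at key
    calc ‖f.toFun (((σ0 + u * d : ℝ) : ℂ) + ((t : ℝ) : ℂ) * Complex.I)‖
        = ‖g z‖ := by rw [hzpt]
      _ ≤ f.M σ0 ^ (1 - u) * f.M σ2 ^ u := key
  · show z.re ∈ Set.Icc (0:ℝ) 1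
    rw [hzre]
    exact ⟨hu0, hu1⟩
  · exact ⟨hgdiff.differentiableOn, hgdiff.continuous.continuousOn⟩
  · refine ⟨f.S σ2, ?_⟩
    rintro x ⟨w, hw, rfl⟩
    simp only [Function.comp_apply]
    refine (f.norm_toFun_le _).trans ?_
    rw [hre]
    apply f.S_mono
    have hw1 : w.re ≤ 1 := hw.2
    nlinarith
  · intro w hw
    have hw0 : w.re = 0 := hw
    have := f.norm_le_M ((σ0 : ℂ) + w * (d : ℂ))
    rwa [hre, hw0, zero_mul, add_zero] at this
  · intro w hw
    have hw1 : w.re = 1 := hw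
    have := f.norm_le_M ((σ0 : ℂ) + w * (d : ℂ))
    rwa [hre, hw1, one_mul, hd, show σ0 + (σ2 - σ0) = σ2 by ring] at this

lemma M_mono : Monotone f.M := by
  intro σ1 σ2 h12
  rcases eq_or_lt_of_le h12 with rfl | hlt
  · exact le_refl _
  by_contra hcon
  push_neg at hcon
  set v := f.M σ1 with hv
  have hvpos : 0 < v := lt_of_le_of_lt (f.M_nonneg σ2) hcon
  obtain ⟨σ0, hσ0lt, hσ0v⟩ : ∃ σ0, σ0 < σ1 ∧ f.M σ0 < v := by
    have h1 : ∀ᶠ σ in atBot, f.M σ < v := f.M_tendsto_atBot.eventually_lt_const hvpos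
    have h2 : ∀ᶠ σ : ℝ in atBot, σ < σ1 := eventually_lt_atBot σ1
    obtain ⟨σ0, h1, h2⟩ := (h1.and h2).exists
    exact ⟨σ0, h2, h1⟩
  set u := (σ1 - σ0) / (σ2 - σ0) with hu
  have hupos : 0 < u := div_pos (by linarith) (by linarith)
  have hult : u < 1 := (div_lt_one (by linarith)).2 (by linarith)
  have hne : σ2 - σ0 ≠ 0 := by linarith
  have heq : σ0 + u * (σ2 - σ0) = σ1 := by
    rw [hu, div_mul_cancel₀ _ hne]; ring
  have hinterp := f.M_interp σ0 σ2 (by linarith) hupos.le hult.le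
  rw [heq] at hinterp
  have hbound : f.M σ0 ^ (1 - u) * f.M σ2 ^ u < v ^ (1 - u) * v ^ u := by
    apply mul_lt_mul'' (Real.rpow_lt_rpow (f.M_nonneg σ0) hσ0v (by linarith))
      (Real.rpow_lt_rpow (f.M_nonneg σ2) hcon hupos)
      (Real.rpow_nonneg (f.M_nonneg σ0) _) (Real.rpow_nonneg (f.M_nonneg σ2) _)
  rw [← Real.rpow_add hvpos, show 1 - u + u = 1 by ring, Real.rpow_one] at hbound
  linarith

lemma M_strict {σs : ℝ} (hσs : 0 < f.M σs) :
    ∀ σ1 σ2, σs ≤ σ1 → σ1 < σ2 → f.M σ1 < f.M σ2 := by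
  intro σ1 σ2 hs1 h12
  rcases lt_or_eq_of_le (f.M_mono h12.le) with hlt | heq
  · exact hlt
  exfalso
  set v := f.M σ2 with hv
  have hvpos : 0 < v := lt_of_lt_of_le hσs (le_trans (f.M_mono hs1) heq.le)
  obtain ⟨σ0, hσ0lt, hσ0v⟩ : ∃ σ0, σ0 < σ1 ∧ f.M σ0 < v := by
    have h1 : ∀ᶠ σ in atBot, f.M σ < v := f.M_tendsto_atBot.eventually_lt_const hvpos
    have h2 : ∀ᶠ σ : ℝ in atBot, σ < σ1 := eventually_lt_atBot σ1
    obtain ⟨σ0, h1, h2⟩ := (h1.and h2).exists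
    exact ⟨σ0, h2, h1⟩
  set u := (σ1 - σ0) / (σ2 - σ0) with hu
  have hupos : 0 < u := div_pos (by linarith) (by linarith)
  have hult : u < 1 := (div_lt_one (by linarith)).2 (by linarith)
  have hne : σ2 - σ0 ≠ 0 := by linarith
  have heqpt : σ0 + u * (σ2 - σ0) = σ1 := by
    rw [hu, div_mul_cancel₀ _ hne]; ring
  have hinterp := f.M_interp σ0 σ2 (by linarith) hupos.le hult.le
  rw [heqpt, ← hv] at hinterp
  have hbound : f.M σ0 ^ (1 - u) * v ^ u < v ^ (1 - u) * v ^ u := by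
    apply mul_lt_mul_of_pos_right
      (Real.rpow_lt_rpow (f.M_nonneg σ0) hσ0v (by linarith))
      (Real.rpow_pos_of_pos hvpos _)
  rw [← Real.rpow_add hvpos, show 1 - u + u = 1 by ring, Real.rpow_one] at hbound
  have hMv : f.M σ1 = v := heq
  linarith

lemma M_tendsto_atTop (hnt : ∃ σ, 0 < f.M σ) : Tendsto f.M atTop atTop := by
  apply tendsto_atTop_atTop_of_monotone f.M_mono
  by_contra hcon
  push_neg at hcon
  obtain ⟨b, hb⟩ := hcon
  have hbounded : Bornology.IsBounded (Set.range f.toFun) := by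
    rw [Metric.isBounded_iff_subset_closedBall 0]
    refine ⟨b, ?_⟩
    rintro x ⟨s, rfl⟩
    rw [Metric.mem_closedBall, dist_zero_right]
    exact le_trans (f.norm_le_M s) (hb s.re).le
  have hconst : ∀ s : ℂ, f.toFun s = f.toFun 0 := fun s =>
    f.differentiable_toFun.apply_eq_apply_of_bounded hbounded s 0
  have hMconst : ∀ σ : ℝ, f.M σ = ‖f.toFun 0‖ := by
    intro σ
    rw [M]
    have : (fun t : ℝ => ‖f.toFun ((σ : ℂ) + (t : ℂ) * Complex.I)‖)
        = fun _ : ℝ => ‖f.toFun 0‖ := by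
      funext t; rw [hconst ((σ : ℂ) + (t : ℂ) * Complex.I)]
    rw [this, ciSup_const]
  have hzero : ‖f.toFun 0‖ = 0 := by
    have h1 : Tendsto f.M atBot (𝓝 ‖f.toFun 0‖) := by
      have : f.M = fun _ => ‖f.toFun 0‖ := funext hMconst
      rw [this]; exact tendsto_const_nhds
    exact tendsto_nhds_unique h1 f.M_tendsto_atBot
  obtain ⟨σnt, hσnt⟩ := hnt
  rw [hMconst σnt, hzero] at hσnt
  exact lt_irrefl _ hσnt

lemma exists_M_eq {σs : ℝ} (hσs : 0 < f.M σs) {y : ℝ} (hy : f.M σs < y) :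
    ∃ σ, σs < σ ∧ f.M σ = y := by
  obtain ⟨T, hT⟩ : ∃ T, y ≤ f.M T := by
    have := (f.M_tendsto_atTop ⟨σs, hσs⟩).eventually (eventually_ge_atTop y)
    exact this.exists
  have hsT : σs ≤ T := by
    by_contra hc
    push_neg at hc
    have := f.M_mono hc.le
    linarith
  have hsub := intermediate_value_Icc hsT f.M_continuous.continuousOn
  have hymem : y ∈ Set.Icc (f.M σs) (f.M T) := ⟨hy.le, hT⟩
  obtain ⟨σ, hσmem, hσeq⟩ := hsub hymem
  refine ⟨σ, ?_, hσeq⟩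
  rcases eq_or_lt_of_le hσmem.1 with heq | hlt
  · exfalso; rw [← heq] at hσeq; linarith
  · exact hlt

lemma Minv_spec {σs : ℝ} (hσs : 0 < f.M σs) {y : ℝ} (hy : f.M σs < y) :
    σs < f.Minv y ∧ f.M (f.Minv y) = y := by
  obtain ⟨σ, hσlt, hσeq⟩ := f.exists_M_eq hσs hy
  have hset : {σ' : ℝ | y ≤ f.M σ'} = Set.Ici σ := by
    ext σ'
    simp only [Set.mem_setOf_eq, Set.mem_Ici]
    constructor
    · intro hy'
      by_contra hc
      push_neg at hc
      rcases le_or_gt σ' σs with hle | hlt'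
      · have := f.M_mono hle
        linarith
      · have := f.M_strict hσs σ' σ hlt'.le hc
        linarith
    · intro h
      rw [← hσeq]
      exact f.M_mono h
  rw [VVDS.Minv, hset, csInf_Ici]
  exact ⟨hσlt, hσeq⟩

lemma Minv_M {σs : ℝ} (hσs : 0 < f.M σs) {σ : ℝ} (hσ : σs < σ) : f.Minv (f.M σ) = σ := by
  have hy : f.M σs < f.M σ := f.M_strict hσs σs σ le_rfl hσ
  obtain ⟨h1, h2⟩ := f.Minv_spec hσs hy
  by_contra hne
  rcases lt_or_gt_of_ne hne with hlt | hgt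
  · have := f.M_strict hσs _ _ h1.le hlt
    linarith [this, h2.ge]
  · have := f.M_strict hσs _ _ hσ.le hgt
    linarith [this, h2.le]

lemma Minv_tendsto (hnt : ∃ σ, 0 < f.M σ) : Tendsto f.Minv atTop atTop := by
  obtain ⟨σs, hσs⟩ := hnt
  rw [tendsto_atTop_atTop]
  intro C
  set C' := max C σs with hC'
  refine ⟨max (f.M σs) (f.M C') + 1, fun y hy => ?_⟩
  have hy1 : f.M σs < y := by
    have := le_max_left (f.M σs) (f.M C')
    linarith
  have hy2 : f.M C' < y := by
    have := le_max_right (f.M σs) (f.M C')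
    linarith
  obtain ⟨h1, h2⟩ := f.Minv_spec hσs hy1
  have : C' < f.Minv y := by
    by_contra hc
    push_neg at hc
    have := f.M_mono hc
    linarith
  calc C ≤ C' := le_max_left _ _
    _ ≤ f.Minv y := this.le


variable {E' F' : Type*} [NormedAddCommGroup E'] [NormedSpace ℂ E'] [CompleteSpace E']
  [NormedAddCommGroup F'] [NormedSpace ℂ F'] [CompleteSpace F']

lemma ev_M_Minv (A : VVDS E') (B : VVDS F') (hA : ∃ σ, 0 < A.M σ) {σB : ℝ}
    (hσB : 0 < B.M σB) :
    ∀ᶠ σ in atTop, B.M (B.Minv (A.M σ)) = A.M σ := by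
  have h1 : ∀ᶠ σ in atTop, B.M σB < A.M σ :=
    (A.M_tendsto_atTop hA).eventually (eventually_gt_atTop _)
  filter_upwards [h1] with σ h1
  exact (B.Minv_spec hσB h1).2

lemma map_Minv_M (A : VVDS E') (B : VVDS F') (hA : ∃ σ, 0 < A.M σ) (hB : ∃ σ, 0 < B.M σ) :
    Filter.map (fun σ => B.Minv (A.M σ)) atTop = atTop := by
  obtain ⟨σA, hσA⟩ := hA
  obtain ⟨σB, hσB⟩ := hB
  set x : ℝ → ℝ := fun σ => B.Minv (A.M σ) with hxdef
  set x' : ℝ → ℝ := fun ξ => A.Minv (B.M ξ) with hx'def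
  have hx : Tendsto x atTop atTop := (B.Minv_tendsto ⟨σB, hσB⟩).comp (A.M_tendsto_atTop ⟨σA, hσA⟩)
  have hx' : Tendsto x' atTop atTop := (A.Minv_tendsto ⟨σA, hσA⟩).comp (B.M_tendsto_atTop ⟨σB, hσB⟩)
  have hid : (x ∘ x') =ᶠ[atTop] id := by
    have h1 : ∀ᶠ ξ in atTop, A.M σA < B.M ξ :=
      (B.M_tendsto_atTop ⟨σB, hσB⟩).eventually (eventually_gt_atTop _)
    have h2 : ∀ᶠ ξ : ℝ in atTop, σB < ξ := eventually_gt_atTop σB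
    filter_upwards [h1, h2] with ξ h1 h2
    show B.Minv (A.M (A.Minv (B.M ξ))) = ξ
    rw [(A.Minv_spec hσA h1).2]
    exact B.Minv_M hσB h2
  apply le_antisymm hx
  calc atTop = Filter.map (x ∘ x') atTop := by rw [Filter.map_congr hid, Filter.map_id]
    _ = Filter.map x (Filter.map x' atTop) := (Filter.map_map).symm
    _ ≤ Filter.map x atTop := Filter.map_mono hx'

end VVDS


theorem stmt_1 (f : VVDS E) (g : VVDS F) (h : VVDS G) (p q m : ℕ)
    (hf1 : (0 : EReal) < relRittLowerOrder m q f h)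
    (hfr : relRittLowerOrder m q f h = relRittOrder m q f h)
    (hf3 : relRittOrder m q f h < ⊤)
    (hg1 : (0 : EReal) < relRittLowerOrder m p g h)
    (hg2 : relRittLowerOrder m p g h ≤ relRittOrder m p g h)
    (hg3 : relRittOrder m p g h < ⊤)
    :
    relRittLowerOrder p q f g = (((relRittOrder m q f h).toReal / (relRittOrder m p g h).toReal : ℝ) : EReal) ∧ relRittOrder p q f g = (((relRittOrder m q f h).toReal / (relRittLowerOrder m p g h).toReal : ℝ) : EReal) ∧ (relRittOrder m q f h = relRittOrder m p g h → relRittLowerOrder p q f g = 1 ∧ relRittOrder q p g f = 1) := by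
  have hiter : ∀ k : ℕ, Tendsto (Real.log^[k]) atTop atTop := by
    intro k
    induction k with
    | zero => simpa using tendsto_id
    | succ n ih =>
      rw [Function.iterate_succ']
      exact Real.tendsto_log_atTop.comp ih
  have hiterzero : ∀ k : ℕ, Real.log^[k] (0:ℝ) = 0 := fun k =>
    Function.iterate_fixed Real.log_zero k
  have hMinv0 : h.Minv 0 = 0 := by
    rw [VVDS.Minv]
    have huniv : {σ : ℝ | (0:ℝ) ≤ h.M σ} = Set.univ := by
      ext σ; simp [h.M_nonneg σ]
    rw [huniv]
    exact Real.sInf_of_not_bddBelow not_bddBelow_univ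
  -- f is nontrivial
  have hfnt : ∃ σ, 0 < f.M σ := by
    by_contra hc; push_neg at hc
    have hM0 : ∀ σ, f.M σ = 0 := fun σ => le_antisymm (hc σ) (f.M_nonneg σ)
    have hzero : relRittLowerOrder m q f h = ((0:ℝ):EReal) := by
      rw [relRittLowerOrder]
      have hfun : (fun σ : ℝ => ((Real.log^[m] (h.Minv (f.M σ)) / Real.log^[q] σ : ℝ) : EReal))
          = fun _ : ℝ => ((0:ℝ) : EReal) := by
        funext σ; rw [hM0 σ, hMinv0, hiterzero m, zero_div]
      rw [hfun]
      exact liminf_const _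
    rw [hzero] at hf1
    exact lt_irrefl _ (by exact_mod_cast hf1)
  have hgnt : ∃ σ, 0 < g.M σ := by
    by_contra hc; push_neg at hc
    have hM0 : ∀ σ, g.M σ = 0 := fun σ => le_antisymm (hc σ) (g.M_nonneg σ)
    have hzero : relRittLowerOrder m p g h = ((0:ℝ):EReal) := by
      rw [relRittLowerOrder]
      have hfun : (fun σ : ℝ => ((Real.log^[m] (h.Minv (g.M σ)) / Real.log^[p] σ : ℝ) : EReal))
          = fun _ : ℝ => ((0:ℝ) : EReal) := by
        funext σ; rw [hM0 σ, hMinv0, hiterzero m, zero_div]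
      rw [hfun]
      exact liminf_const _
    rw [hzero] at hg1
    exact lt_irrefl _ (by exact_mod_cast hg1)
  obtain ⟨σf, hσf⟩ := hfnt
  obtain ⟨σg, hσg⟩ := hgnt
  -- real constants
  have hρf_pos : (0:EReal) < relRittOrder m q f h := hfr ▸ hf1
  have hρf_netop : relRittOrder m q f h ≠ ⊤ := hf3.ne
  have hρf_nebot : relRittOrder m q f h ≠ ⊥ := by
    intro hbot; rw [hbot] at hρf_pos; exact not_lt_bot hρf_pos
  have hc_coe : (((relRittOrder m q f h).toReal : ℝ) : EReal) = relRittOrder m q f h :=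
    EReal.coe_toReal hρf_netop hρf_nebot
  set c := (relRittOrder m q f h).toReal with hcdef
  have hcpos : 0 < c := by
    rw [← EReal.coe_pos (x := c), hc_coe]; exact hρf_pos
  have hρg_pos : (0:EReal) < relRittOrder m p g h := lt_of_lt_of_le hg1 hg2
  have hρg_netop : relRittOrder m p g h ≠ ⊤ := hg3.ne
  have hρg_nebot : relRittOrder m p g h ≠ ⊥ := by
    intro hbot; rw [hbot] at hρg_pos; exact not_lt_bot hρg_pos
  have hLg_netop : relRittLowerOrder m p g h ≠ ⊤ := (lt_of_le_of_lt hg2 hg3).ne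
  have hLg_nebot : relRittLowerOrder m p g h ≠ ⊥ := by
    intro hbot; rw [hbot] at hg1; exact not_lt_bot hg1
  have hrho_coe : (((relRittOrder m p g h).toReal : ℝ) : EReal) = relRittOrder m p g h :=
    EReal.coe_toReal hρg_netop hρg_nebot
  have hlam_coe : (((relRittLowerOrder m p g h).toReal : ℝ) : EReal) = relRittLowerOrder m p g h :=
    EReal.coe_toReal hLg_netop hLg_nebot
  set rho := (relRittOrder m p g h).toReal with hrhodef
  set lam := (relRittLowerOrder m p g h).toReal with hlamdef
  have hrho_pos : 0 < rho := by
    rw [← EReal.coe_pos (x := rho), hrho_coe]; exact hρg_pos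
  have hlam_pos : 0 < lam := by
    rw [← EReal.coe_pos (x := lam), hlam_coe]; exact hg1
  have hlamrho : lam ≤ rho := by
    rw [← EReal.coe_le_coe_iff, hlam_coe, hrho_coe]; exact hg2
  -- the tendsto of α
  have hαtend : Tendsto (fun σ : ℝ => Real.log^[m] (h.Minv (f.M σ)) / Real.log^[q] σ)
      atTop (𝓝 c) := by
    rw [← EReal.tendsto_coe]
    have h1 : liminf
        (fun σ : ℝ => ((Real.log^[m] (h.Minv (f.M σ)) / Real.log^[q] σ : ℝ) : EReal)) atTop
        = ((c : ℝ) : EReal) := by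
      rw [show liminf
          (fun σ : ℝ => ((Real.log^[m] (h.Minv (f.M σ)) / Real.log^[q] σ : ℝ) : EReal)) atTop
          = relRittLowerOrder m q f h from rfl, hfr]
      exact hc_coe.symm
    have h2 : limsup
        (fun σ : ℝ => ((Real.log^[m] (h.Minv (f.M σ)) / Real.log^[q] σ : ℝ) : EReal)) atTop
        = ((c : ℝ) : EReal) := by
      rw [show limsup
          (fun σ : ℝ => ((Real.log^[m] (h.Minv (f.M σ)) / Real.log^[q] σ : ℝ) : EReal)) atTop
          = relRittOrder m q f h from rfl]
      exact hc_coe.symm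
    exact tendsto_of_liminf_eq_limsup h1 h2
  -- liminf and limsup of β
  have hβinf : liminf
      (fun ξ : ℝ => ((Real.log^[m] (h.Minv (g.M ξ)) / Real.log^[p] ξ : ℝ) : EReal)) atTop
      = ((lam : ℝ) : EReal) := by
    rw [show liminf
        (fun ξ : ℝ => ((Real.log^[m] (h.Minv (g.M ξ)) / Real.log^[p] ξ : ℝ) : EReal)) atTop
        = relRittLowerOrder m p g h from rfl]
    exact hlam_coe.symm
  have hβsup : limsup
      (fun ξ : ℝ => ((Real.log^[m] (h.Minv (g.M ξ)) / Real.log^[p] ξ : ℝ) : EReal)) atTop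
      = ((rho : ℝ) : EReal) := by
    rw [show limsup
        (fun ξ : ℝ => ((Real.log^[m] (h.Minv (g.M ξ)) / Real.log^[p] ξ : ℝ) : EReal)) atTop
        = relRittOrder m p g h from rfl]
    exact hrho_coe.symm
  -- the change of variable x
  have hxtend : Tendsto (fun σ : ℝ => g.Minv (f.M σ)) atTop atTop :=
    (g.Minv_tendsto ⟨σg, hσg⟩).comp (f.M_tendsto_atTop ⟨σf, hσf⟩)
  have hmap : Filter.map (fun σ : ℝ => g.Minv (f.M σ)) atTop = atTop :=
    VVDS.map_Minv_M f g ⟨σf, hσf⟩ ⟨σg, hσg⟩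
  -- liminf/limsup of γ = β ∘ x
  have hγinf : liminf (fun σ : ℝ =>
      ((Real.log^[m] (h.Minv (g.M (g.Minv (f.M σ)))) / Real.log^[p] (g.Minv (f.M σ)) : ℝ)
        : EReal)) atTop = ((lam : ℝ) : EReal) := by
    rw [show (fun σ : ℝ =>
        ((Real.log^[m] (h.Minv (g.M (g.Minv (f.M σ)))) / Real.log^[p] (g.Minv (f.M σ)) : ℝ)
          : EReal))
        = (fun ξ : ℝ => ((Real.log^[m] (h.Minv (g.M ξ)) / Real.log^[p] ξ : ℝ) : EReal))
            ∘ (fun σ : ℝ => g.Minv (f.M σ)) from rfl,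
      Filter.liminf_comp, hmap]
    exact hβinf
  have hγsup : limsup (fun σ : ℝ =>
      ((Real.log^[m] (h.Minv (g.M (g.Minv (f.M σ)))) / Real.log^[p] (g.Minv (f.M σ)) : ℝ)
        : EReal)) atTop = ((rho : ℝ) : EReal) := by
    rw [show (fun σ : ℝ =>
        ((Real.log^[m] (h.Minv (g.M (g.Minv (f.M σ)))) / Real.log^[p] (g.Minv (f.M σ)) : ℝ)
          : EReal))
        = (fun ξ : ℝ => ((Real.log^[m] (h.Minv (g.M ξ)) / Real.log^[p] ξ : ℝ) : EReal))
            ∘ (fun σ : ℝ => g.Minv (f.M σ)) from rfl,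
      Filter.limsup_comp, hmap]
    exact hβsup
  -- eventual positivity of γ
  have hγpos : ∀ᶠ σ in atTop,
      0 < Real.log^[m] (h.Minv (g.M (g.Minv (f.M σ)))) / Real.log^[p] (g.Minv (f.M σ)) := by
    have h0 : ((0:ℝ) : EReal) < liminf (fun σ : ℝ =>
        ((Real.log^[m] (h.Minv (g.M (g.Minv (f.M σ)))) / Real.log^[p] (g.Minv (f.M σ)) : ℝ)
          : EReal)) atTop := by
      rw [hγinf]; exact_mod_cast hlam_pos
    filter_upwards [eventually_lt_of_lt_liminf h0] with σ hσ
    exact_mod_cast hσ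
  -- the key eventual identity
  have hev_id : ∀ᶠ σ in atTop,
      Real.log^[p] (g.Minv (f.M σ)) / Real.log^[q] σ
        = (Real.log^[m] (h.Minv (f.M σ)) / Real.log^[q] σ) /
          (Real.log^[m] (h.Minv (g.M (g.Minv (f.M σ)))) / Real.log^[p] (g.Minv (f.M σ))) := by
    have e1 : ∀ᶠ σ : ℝ in atTop, 0 < Real.log^[q] σ :=
      (hiter q).eventually (eventually_gt_atTop 0)
    have e2 : ∀ᶠ σ : ℝ in atTop, 0 < Real.log^[p] (g.Minv (f.M σ)) :=
      ((hiter p).comp hxtend).eventually (eventually_gt_atTop 0)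
    have e4 : ∀ᶠ σ in atTop, g.M (g.Minv (f.M σ)) = f.M σ :=
      VVDS.ev_M_Minv f g ⟨σf, hσf⟩ hσg
    filter_upwards [e1, e2, e4, hγpos] with σ h1 h2 h4 h5
    rw [h4] at h5 ⊢
    have hW : 0 < Real.log^[m] (h.Minv (f.M σ)) := by
      have := mul_pos h5 h2
      rwa [div_mul_cancel₀ _ h2.ne'] at this
    field_simp
  -- apply the quotient lemma
  have hquo := RittAux.quo hcpos hlam_pos hlamrho hαtend hγinf hγsup
  have hcongr_inf : relRittLowerOrder p q f g = liminf (fun σ : ℝ =>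
      (((Real.log^[m] (h.Minv (f.M σ)) / Real.log^[q] σ) /
        (Real.log^[m] (h.Minv (g.M (g.Minv (f.M σ)))) / Real.log^[p] (g.Minv (f.M σ))) : ℝ)
        : EReal)) atTop := by
    rw [relRittLowerOrder]
    apply liminf_congr
    filter_upwards [hev_id] with σ hσ
    rw [hσ]
  have hcongr_sup : relRittOrder p q f g = limsup (fun σ : ℝ =>
      (((Real.log^[m] (h.Minv (f.M σ)) / Real.log^[q] σ) /
        (Real.log^[m] (h.Minv (g.M (g.Minv (f.M σ)))) / Real.log^[p] (g.Minv (f.M σ))) : ℝ)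
        : EReal)) atTop := by
    rw [relRittOrder]
    apply limsup_congr
    filter_upwards [hev_id] with σ hσ
    rw [hσ]
  have hconc1 : relRittLowerOrder p q f g = ((c / rho : ℝ) : EReal) := by
    rw [hcongr_inf]; exact hquo.1
  have hconc2 : relRittOrder p q f g = ((c / lam : ℝ) : EReal) := by
    rw [hcongr_sup]; exact hquo.2
  refine ⟨hconc1, hconc2, ?_⟩
  intro heq
  have hcr : c = rho := by
    rw [hcdef, hrhodef, heq]
  constructor
  · rw [hconc1, hcr, div_self hrho_pos.ne']
    exact_mod_cast EReal.coe_one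
  · -- the reversed order
    have hutend : Tendsto (fun ξ : ℝ => f.Minv (g.M ξ)) atTop atTop :=
      (f.Minv_tendsto ⟨σf, hσf⟩).comp (g.M_tendsto_atTop ⟨σg, hσg⟩)
    have hαu : Tendsto (fun ξ : ℝ =>
        Real.log^[m] (h.Minv (f.M (f.Minv (g.M ξ)))) / Real.log^[q] (f.Minv (g.M ξ)))
        atTop (𝓝 c) := hαtend.comp hutend
    have hαupos : ∀ᶠ ξ in atTop,
        0 < Real.log^[m] (h.Minv (f.M (f.Minv (g.M ξ)))) / Real.log^[q] (f.Minv (g.M ξ)) :=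
      hαu.eventually_const_lt hcpos
    have hev_id' : ∀ᶠ ξ in atTop,
        Real.log^[q] (f.Minv (g.M ξ)) / Real.log^[p] ξ
          = (Real.log^[m] (h.Minv (g.M ξ)) / Real.log^[p] ξ) /
            (Real.log^[m] (h.Minv (f.M (f.Minv (g.M ξ)))) / Real.log^[q] (f.Minv (g.M ξ))) := by
      have e1 : ∀ᶠ ξ : ℝ in atTop, 0 < Real.log^[p] ξ :=
        (hiter p).eventually (eventually_gt_atTop 0)
      have e2 : ∀ᶠ ξ : ℝ in atTop, 0 < Real.log^[q] (f.Minv (g.M ξ)) :=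
        ((hiter q).comp hutend).eventually (eventually_gt_atTop 0)
      have e4 : ∀ᶠ ξ in atTop, f.M (f.Minv (g.M ξ)) = g.M ξ :=
        VVDS.ev_M_Minv g f ⟨σg, hσg⟩ hσf
      filter_upwards [e1, e2, e4, hαupos] with ξ h1 h2 h4 h5
      rw [h4] at h5 ⊢
      have hW : 0 < Real.log^[m] (h.Minv (g.M ξ)) := by
        have := mul_pos h5 h2
        rwa [div_mul_cancel₀ _ h2.ne'] at this
      field_simp
    have hquo2 := RittAux.quo2 hcpos hlam_pos hlamrho hαu hβinf hβsup
    have hcongr' : relRittOrder q p g f = limsup (fun ξ : ℝ =>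
        (((Real.log^[m] (h.Minv (g.M ξ)) / Real.log^[p] ξ) /
          (Real.log^[m] (h.Minv (f.M (f.Minv (g.M ξ)))) / Real.log^[q] (f.Minv (g.M ξ))) : ℝ)
          : EReal)) atTop := by
      rw [relRittOrder]
      apply limsup_congr
      filter_upwards [hev_id'] with ξ hξ
      rw [hξ]
    rw [hcongr', hquo2, hcr, div_self hrho_pos.ne']
    exact_mod_cast EReal.coe_one
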